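/- arXiv:2302.11614 — 4 statements merged into one kernel-verified Lean document; each statement's English description precedes it below -/
import Mathlib

section
/- Let p ≥ d ≥ 1 and n, m ≥ 0. Consider the constraint map Φ from the product space (ℝ^{p×d})^n × (ℝ^p)^m to (Sym_d(ℝ))^n × ℝ^m defined by Φ(R_1,…,R_n, r_1,…,r_m) = ((R_1ᵀR_1,…,R_nᵀR_n), (‖r_1‖²,…,‖r_m‖²)), where Sym_d(ℝ) denotes the real vector space of symmetric d×d matrices. Then at every feasible point — i.e., every point satisfying R_iᵀR_i = I_d for all i and ‖r_j‖² = 1 for all j — the (Fréchet) derivative of Φ is surjective. (Equivalently, the gradients of all scalar constraints defining the feasible set of the rank-restricted SDP are linearly independent, so the linear independence constraint qualification holds at every feasible point.) -/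
open Matrix

attribute [local instance] Matrix.normedAddCommGroup Matrix.normedSpace

/-- **LICQ for the rank-restricted SDP.** Let `p ≥ d ≥ 1`. The constraint map
`Φ(R₁,…,Rₙ, r₁,…,r_m) = ((RᵢᵀRᵢ)ᵢ, (‖rⱼ‖²)ⱼ)` is Fréchet differentiable at every feasible
point (where `RᵢᵀRᵢ = I` and `‖rⱼ‖² = 1`), and its derivative there is surjective onto
`(Sym_d(ℝ))ⁿ × ℝᵐ` (targets whose matrix components are symmetric). -/
theorem licq_holds_at_feasible_points {p d n m : ℕ} (hd : 1 ≤ d) (hpd : d ≤ p)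
    (Φ : ((Fin n → Matrix (Fin p) (Fin d) ℝ) × (Fin m → EuclideanSpace ℝ (Fin p))) →
         ((Fin n → Matrix (Fin d) (Fin d) ℝ) × (Fin m → ℝ)))
    (hΦ : ∀ x, Φ x = (fun i => (x.1 i)ᵀ * x.1 i, fun j => ‖x.2 j‖ ^ 2))
    (x : (Fin n → Matrix (Fin p) (Fin d) ℝ) × (Fin m → EuclideanSpace ℝ (Fin p)))
    (hfeas₁ : ∀ i, (x.1 i)ᵀ * x.1 i = 1)
    (hfeas₂ : ∀ j, ‖x.2 j‖ ^ 2 = 1) :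
    ∃ f : ((Fin n → Matrix (Fin p) (Fin d) ℝ) × (Fin m → EuclideanSpace ℝ (Fin p))) →L[ℝ]
          ((Fin n → Matrix (Fin d) (Fin d) ℝ) × (Fin m → ℝ)),
      HasFDerivAt Φ f x ∧
      ∀ (T : Fin n → Matrix (Fin d) (Fin d) ℝ) (s : Fin m → ℝ),
        (∀ i, (T i).IsSymm) → ∃ u, f u = (T, s) := by
  classical
  let Bl : Matrix (Fin p) (Fin d) ℝ →ₗ[ℝ] Matrix (Fin p) (Fin d) ℝ →ₗ[ℝ]
      Matrix (Fin d) (Fin d) ℝ := LinearMap.mk₂ ℝ (fun A C => Aᵀ * C)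
    (fun A A' C => by simp [Matrix.transpose_add, Matrix.add_mul])
    (fun c A C => by simp [Matrix.transpose_smul, Matrix.smul_mul])
    (fun A C C' => by simp [Matrix.mul_add])
    (fun c A C => by simp [Matrix.mul_smul])
  let B1 : Matrix (Fin p) (Fin d) ℝ →ₗ[ℝ]
      (Matrix (Fin p) (Fin d) ℝ →L[ℝ] Matrix (Fin d) (Fin d) ℝ) :=
    (LinearMap.toContinuousLinearMap).toLinearMap.comp Bl
  let B : Matrix (Fin p) (Fin d) ℝ →L[ℝ]
      Matrix (Fin p) (Fin d) ℝ →L[ℝ] Matrix (Fin d) (Fin d) ℝ :=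
    LinearMap.toContinuousLinearMap B1
  have hB : ∀ A C : Matrix (Fin p) (Fin d) ℝ, B A C = Aᵀ * C := fun A C => rfl
  let L1 : ∀ _ : Fin n, ((Fin n → Matrix (Fin p) (Fin d) ℝ) ×
      (Fin m → EuclideanSpace ℝ (Fin p))) →L[ℝ] Matrix (Fin p) (Fin d) ℝ := fun i =>
    (ContinuousLinearMap.proj i).comp (ContinuousLinearMap.fst ℝ _ _)
  let L2 : ∀ _ : Fin m, ((Fin n → Matrix (Fin p) (Fin d) ℝ) ×
      (Fin m → EuclideanSpace ℝ (Fin p))) →L[ℝ] EuclideanSpace ℝ (Fin p) := fun j =>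
    (ContinuousLinearMap.proj j).comp (ContinuousLinearMap.snd ℝ _ _)
  let D1 : ∀ _ : Fin n, ((Fin n → Matrix (Fin p) (Fin d) ℝ) ×
      (Fin m → EuclideanSpace ℝ (Fin p))) →L[ℝ] Matrix (Fin d) (Fin d) ℝ := fun i =>
    ((B (x.1 i)).comp (L1 i)) + (show ((Fin n → Matrix (Fin p) (Fin d) ℝ) ×
        (Fin m → EuclideanSpace ℝ (Fin p))) →L[ℝ] Matrix (Fin d) (Fin d) ℝ from (B.flip (x.1 i)).comp (L1 i))
  let D2 : ∀ _ : Fin m, ((Fin n → Matrix (Fin p) (Fin d) ℝ) ×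
      (Fin m → EuclideanSpace ℝ (Fin p))) →L[ℝ] ℝ := fun j =>
    2 • (innerSL ℝ (x.2 j)).comp (L2 j)
  refine ⟨(ContinuousLinearMap.pi D1).prod (ContinuousLinearMap.pi D2), ?_, ?_⟩
  · have hΦeq : Φ = fun y => ((fun i => (y.1 i)ᵀ * y.1 i), (fun j => ‖y.2 j‖ ^ 2)) :=
      funext hΦ
    rw [hΦeq]
    apply HasFDerivAt.prodMk
    · apply hasFDerivAt_pi.2
      intro i
      have h1 : HasFDerivAt (fun y : (Fin n → Matrix (Fin p) (Fin d) ℝ) ×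
            (Fin m → EuclideanSpace ℝ (Fin p)) => B (L1 i y) (L1 i y))
          (B.precompR _ (L1 i x) (L1 i) + B.precompL _ (L1 i) (L1 i x)) x :=
        B.hasFDerivAt_of_bilinear (L1 i).hasFDerivAt (L1 i).hasFDerivAt
      have h2 : HasFDerivAt (fun y : (Fin n → Matrix (Fin p) (Fin d) ℝ) ×
            (Fin m → EuclideanSpace ℝ (Fin p)) => (y.1 i)ᵀ * y.1 i)
          (B.precompR _ (L1 i x) (L1 i) + B.precompL _ (L1 i) (L1 i x)) x := h1
      convert h2 using 1
      exact Iff.rfl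
    · apply hasFDerivAt_pi.2
      intro j
      exact ((L2 j).hasFDerivAt (x := x)).norm_sq
  · intro T s hT
    refine ⟨(fun i => x.1 i * ((1/2 : ℝ) • T i), fun j => (s j / 2) • x.2 j), ?_⟩
    have hsym : ∀ i, (T i)ᵀ = T i := fun i => hT i
    refine Prod.ext ?_ ?_ <;> funext i
    · show D1 i _ = T i
      simp only [D1, ContinuousLinearMap.add_apply, ContinuousLinearMap.comp_apply,
        ContinuousLinearMap.flip_apply]
      have hL : L1 i (fun i => x.1 i * ((1/2 : ℝ) • T i), fun j => (s j / 2) • x.2 j)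
          = x.1 i * ((1/2 : ℝ) • T i) := rfl
      change (x.1 i)ᵀ * (x.1 i * ((1/2:ℝ) • T i)) + (x.1 i * ((1/2:ℝ) • T i))ᵀ * x.1 i = T i
      rw [Matrix.transpose_mul, Matrix.transpose_smul, hsym,
        ← Matrix.mul_assoc, Matrix.mul_assoc ((1/2:ℝ) • T i)]
      rw [hfeas₁ i, Matrix.one_mul, Matrix.mul_one, ← add_smul]
      norm_num
    · show D2 i _ = s i
      simp only [D2, ContinuousLinearMap.smul_apply, ContinuousLinearMap.comp_apply]
      have hL : L2 i (fun i => x.1 i * ((1/2 : ℝ) • T i), fun j => (s j / 2) • x.2 j)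
          = (s i / 2) • x.2 i := rfl
      rw [hL, innerSL_apply_apply, real_inner_smul_right, real_inner_self_eq_norm_sq, hfeas₂,
        mul_one, nsmul_eq_mul]
      push_cast
      ring
end

section
/- Let Q, A_1, …, A_m be real symmetric k×k matrices, b ∈ ℝ^m, λ ∈ ℝ^m, β ≥ 0, and let X̂ ∈ ℝ^{k×p} satisfy tr(A_i X̂ X̂ᵀ) = b_i for all i and S X̂ = 0, where S = Q + Σ_{i=1}^m λ_i A_i. If S + βI is positive semidefinite (as certified, e.g., by existence of a Cholesky factorization S + βI = LLᵀ), then for every positive semidefinite Z ∈ ℝ^{k×k} with tr(A_i Z) = b_i for all i, one has tr(Q Z) ≥ tr(Q X̂ X̂ᵀ) − β · tr(Z). In particular β acts as a numerical tolerance in the optimality certificate. -/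
open Matrix BigOperators

lemma trace_mul_psd_nonneg {k : ℕ} {P Z : Matrix (Fin k) (Fin k) ℝ}
    (hP : P.PosSemidef) (hZ : Z.PosSemidef) : 0 ≤ (P * Z).trace := by
  obtain ⟨C, rfl⟩ : ∃ C : Matrix (Fin k) (Fin k) ℝ, P = Cᴴ * C :=
    by open scoped MatrixOrder in exact CStarAlgebra.nonneg_iff_eq_star_mul_self.mp hP.nonneg
  obtain ⟨B, rfl⟩ : ∃ B : Matrix (Fin k) (Fin k) ℝ, Z = Bᴴ * B :=
    by open scoped MatrixOrder in exact CStarAlgebra.nonneg_iff_eq_star_mul_self.mp hZ.nonneg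
  set M := C * Bᴴ with hM
  have key : (Cᴴ * C * (Bᴴ * B)).trace = (Mᴴ * M).trace := by
    rw [hM, Matrix.conjTranspose_mul, Matrix.conjTranspose_conjTranspose,
      ← Matrix.mul_assoc, Matrix.trace_mul_comm]
    simp [Matrix.mul_assoc]
  rw [key]
  simp only [Matrix.trace, Matrix.diag_apply, Matrix.mul_apply, Matrix.conjTranspose_apply,
    star_trivial]
  exact Finset.sum_nonneg fun j _ => Finset.sum_nonneg fun i _ => mul_self_nonneg _

/-- If `S + βI` is positive semidefinite, where `S = Q + ∑ᵢ λᵢ Aᵢ` is the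
certificate matrix, `β ≥ 0`, and `S X̂ = 0` at a feasible `X̂`, then every feasible `Z` of
the SDP satisfies `tr(Q Z) ≥ tr(Q X̂ X̂ᵀ) − β · tr(Z)`. -/
theorem sdp_certificate_tolerance_bound {k p m : ℕ}
    (Q : Matrix (Fin k) (Fin k) ℝ) (A : Fin m → Matrix (Fin k) (Fin k) ℝ)
    (b lam : Fin m → ℝ) (β : ℝ) (hβ : 0 ≤ β) (Xh : Matrix (Fin k) (Fin p) ℝ)
    (hQ : Q.IsSymm) (hA : ∀ i, (A i).IsSymm)
    (hfeas : ∀ i, (A i * (Xh * Xhᵀ)).trace = b i)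
    (hstat : (Q + ∑ i, lam i • A i) * Xh = 0)
    (hPSD : ((Q + ∑ i, lam i • A i) + β • (1 : Matrix (Fin k) (Fin k) ℝ)).PosSemidef) :
    ∀ Z : Matrix (Fin k) (Fin k) ℝ, Z.PosSemidef → (∀ i, (A i * Z).trace = b i) →
      (Q * (Xh * Xhᵀ)).trace - β * Z.trace ≤ (Q * Z).trace := by
  intro Z hZ hZfeas
  set S := Q + ∑ i, lam i • A i with hS
  have h1 : (S * (Xh * Xhᵀ)).trace = 0 := by
    rw [← Matrix.mul_assoc, hstat, Matrix.zero_mul, Matrix.trace_zero]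
  have hexp : ∀ W : Matrix (Fin k) (Fin k) ℝ,
      (S * W).trace = (Q * W).trace + ∑ i, lam i * (A i * W).trace := by
    intro W
    rw [hS, Matrix.add_mul, Matrix.trace_add, Finset.sum_mul, Matrix.trace_sum]
    simp [Matrix.smul_mul, Matrix.trace_smul]
  have h2 : (Q * (Xh * Xhᵀ)).trace = -∑ i, lam i * b i := by
    have := hexp (Xh * Xhᵀ)
    rw [h1] at this
    simp only [hfeas] at this
    linarith
  have h3 : (S * Z).trace = (Q * Z).trace + ∑ i, lam i * b i := by
    rw [hexp Z]; simp [hZfeas]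
  have h4 : 0 ≤ ((S + β • 1) * Z).trace := trace_mul_psd_nonneg hPSD hZ
  have h5 : ((S + β • 1) * Z).trace = (S * Z).trace + β * Z.trace := by
    rw [Matrix.add_mul, Matrix.trace_add, Matrix.smul_mul, Matrix.one_mul, Matrix.trace_smul]
    simp
  rw [h2]
  linarith [h4, h5.symm ▸ h4]
end

section
/- Fix translations t_1, …, t_N ∈ ℝ^n (n ≥ 1), a finite set E of index pairs, nonnegative measured ranges d̃_{ij} ≥ 0 and positive weights w_{ij} > 0 for (i,j) ∈ E. Then the minimum over families of unit vectors (r_{ij})_{(i,j)∈E} ⊂ ℝ^n of Σ_{(i,j)∈E} w_{ij} ‖d̃_{ij}·r_{ij} − (t_i − t_j)‖² equals Σ_{(i,j)∈E} w_{ij} (d̃_{ij} − ‖t_i − t_j‖)², and the minimum is attained. In particular, the reformulated range cost with auxiliary unit-norm variables has the same optimal value (and the same optimal translations) as the original range cost. -/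
open BigOperators

lemma range_cost_aux {n : ℕ} (d : ℝ) (hd : 0 ≤ d) (v r : EuclideanSpace ℝ (Fin n))
    (hr : ‖r‖ = 1) : (d - ‖v‖) ^ 2 ≤ ‖d • r - v‖ ^ 2 := by
  have h1 : ‖d • r - v‖ ^ 2 = ‖d • r‖ ^ 2 - 2 * inner ℝ (d • r) v + ‖v‖ ^ 2 :=
    @norm_sub_sq_real (EuclideanSpace ℝ (Fin n)) _ _ _ _
  have h2 : ‖d • r‖ = d := by
    rw [norm_smul, hr, mul_one, Real.norm_eq_abs, abs_of_nonneg hd]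
  have h3 : (inner ℝ (d • r) v : ℝ) = d * inner ℝ r v := real_inner_smul_left r v d
  have h4 : (inner ℝ r v : ℝ) ≤ ‖r‖ * ‖v‖ := real_inner_le_norm r v
  rw [h1, h2, h3]
  rw [hr] at h4
  nlinarith [norm_nonneg v]

/-- With fixed translations `t₁, …, t_N ∈ ℝⁿ`, nonnegative measured ranges
`d̃ᵢⱼ` and positive weights `wᵢⱼ` over a finite set `E` of index pairs, the minimum over
families of unit vectors `(rᵢⱼ)` of `∑ wᵢⱼ ‖d̃ᵢⱼ·rᵢⱼ − (tᵢ − tⱼ)‖²` equals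
`∑ wᵢⱼ (d̃ᵢⱼ − ‖tᵢ − tⱼ‖)²`, and the minimum is attained. -/
theorem reformulated_range_cost_min {N n : ℕ} (hn : 1 ≤ n)
    (t : Fin N → EuclideanSpace ℝ (Fin n)) (E : Finset (Fin N × Fin N))
    (dt w : Fin N × Fin N → ℝ)
    (hdt : ∀ e ∈ E, 0 ≤ dt e) (hw : ∀ e ∈ E, 0 < w e) :
    IsLeast
      {c : ℝ | ∃ r : Fin N × Fin N → EuclideanSpace ℝ (Fin n),
        (∀ e ∈ E, ‖r e‖ = 1) ∧
        c = ∑ e ∈ E, w e * ‖dt e • r e - (t e.1 - t e.2)‖ ^ 2}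
      (∑ e ∈ E, w e * (dt e - ‖t e.1 - t e.2‖) ^ 2) := by
  classical
  constructor
  · -- membership: choose aligned unit vectors
    set u : EuclideanSpace ℝ (Fin n) := EuclideanSpace.single ⟨0, hn⟩ 1 with hu
    have hunorm : ‖u‖ = 1 := by
      rw [hu, EuclideanSpace.norm_single]; simp
    refine ⟨fun e => if h : (t e.1 - t e.2) = 0 then u
            else ‖t e.1 - t e.2‖⁻¹ • (t e.1 - t e.2), ?_, ?_⟩
    · intro e he
      by_cases h : (t e.1 - t e.2) = 0
      · simp [h, hunorm]
      · simp only [h, dif_neg, not_false_iff]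
        rw [norm_smul, Real.norm_eq_abs, abs_inv, abs_of_nonneg (norm_nonneg _),
          inv_mul_cancel₀ (norm_ne_zero_iff.mpr h)]
    · refine Finset.sum_congr rfl fun e he => ?_
      by_cases h : (t e.1 - t e.2) = 0
      · simp [h, norm_smul, hunorm, abs_of_nonneg (hdt e he)]
      · simp only [h, dif_neg, not_false_iff]
        have hv : ‖t e.1 - t e.2‖ ≠ 0 := norm_ne_zero_iff.mpr h
        have : dt e • ‖t e.1 - t e.2‖⁻¹ • (t e.1 - t e.2) - (t e.1 - t e.2)
            = (dt e * ‖t e.1 - t e.2‖⁻¹ - 1) • (t e.1 - t e.2) := by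
          rw [sub_smul, one_smul, smul_smul]
        rw [this, norm_smul, Real.norm_eq_abs]
        have : |dt e * ‖t e.1 - t e.2‖⁻¹ - 1| * ‖t e.1 - t e.2‖
            = |dt e - ‖t e.1 - t e.2‖| := by
          rw [← abs_of_nonneg (norm_nonneg (t e.1 - t e.2)), ← abs_mul]
          congr 1
          field_simp
          rw [abs_norm]; ring
        rw [this, sq_abs]
  · -- lower bound
    rintro c ⟨r, hr, rfl⟩
    refine Finset.sum_le_sum fun e he => ?_
    exact mul_le_mul_of_nonneg_left
      (range_cost_aux (dt e) (hdt e he) _ _ (hr e he)) (hw e he).le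
end

section
/- Let Q, A_1, …, A_m be real symmetric k×k matrices, b ∈ ℝ^m, λ ∈ ℝ^m, and define the Lagrangian L(X, λ) = tr(Q X Xᵀ) + Σ_{i=1}^m λ_i (tr(A_i X Xᵀ) − b_i) = tr(S X Xᵀ) − Σ_i λ_i b_i with S = Q + Σ_i λ_i A_i. Let X⁺ ∈ ℝ^{k×(p+1)} have last column equal to zero, let v ∈ ℝ^k, and let D ∈ ℝ^{k×(p+1)} be the matrix whose last column is v and whose other columns are zero. Then for every t ∈ ℝ, L(X⁺ + tD, λ) = L(X⁺, λ) + t² · vᵀ S v. In particular, if v lies in the negative eigenspace of S (i.e., vᵀ S v < 0), then D is a descent direction: L(X⁺ + tD, λ) < L(X⁺, λ) for every t ≠ 0. -/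
open Matrix BigOperators

lemma aux_key {k p : ℕ} (Xp : Matrix (Fin k) (Fin (p + 1)) ℝ)
    (hzero : ∀ i : Fin k, Xp i (Fin.last p) = 0)
    (v : Fin k → ℝ) (D : Matrix (Fin k) (Fin (p + 1)) ℝ)
    (hD : ∀ i j, D i j = if j = Fin.last p then v i else 0) (t : ℝ) :
    (Xp + t • D) * (Xp + t • D)ᵀ = Xp * Xpᵀ + (t ^ 2) • vecMulVec v v := by
  have h1 : Xp * Dᵀ = 0 := by
    ext i l
    simp [mul_apply, hD, hzero, transpose_apply]
  have h2 : D * Xpᵀ = 0 := by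
    ext i l
    simp [mul_apply, hD, hzero, transpose_apply]
  have h3 : D * Dᵀ = vecMulVec v v := by
    ext i l
    simp [mul_apply, hD, transpose_apply, vecMulVec_apply]
  rw [transpose_add, transpose_smul, Matrix.add_mul, Matrix.mul_add, Matrix.mul_add,
    Matrix.mul_smul, Matrix.mul_smul, Matrix.smul_mul, Matrix.smul_mul, h1, h2, h3]
  simp [smul_smul, pow_two]

lemma aux_tr {k : ℕ} (M : Matrix (Fin k) (Fin k) ℝ) (v : Fin k → ℝ) :
    (M * vecMulVec v v).trace = v ⬝ᵥ M.mulVec v := by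
  simp only [trace, diag, mul_apply, vecMulVec_apply, dotProduct, mulVec]
  exact Finset.sum_congr rfl fun i _ => by
    rw [Finset.mul_sum]; exact Finset.sum_congr rfl fun j _ => by ring

/-- Let `L(X, λ) = tr(Q X Xᵀ) + ∑ᵢ λᵢ (tr(Aᵢ X Xᵀ) − bᵢ)` be the
Lagrangian of the rank-restricted SDP and `S = Q + ∑ᵢ λᵢ Aᵢ`. If `X⁺` has last column zero
and `D` has last column `v` and all other columns zero, then
`L(X⁺ + tD, λ) = L(X⁺, λ) + t² vᵀSv`; in particular if `vᵀSv < 0` then `D` is a descent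
direction. -/
theorem saddle_escape_direction {k p m : ℕ}
    (Q : Matrix (Fin k) (Fin k) ℝ) (A : Fin m → Matrix (Fin k) (Fin k) ℝ)
    (b lam : Fin m → ℝ) (hQ : Q.IsSymm) (hA : ∀ i, (A i).IsSymm)
    (Xp : Matrix (Fin k) (Fin (p + 1)) ℝ) (hzero : ∀ i : Fin k, Xp i (Fin.last p) = 0)
    (v : Fin k → ℝ) (D : Matrix (Fin k) (Fin (p + 1)) ℝ)
    (hD : ∀ i j, D i j = if j = Fin.last p then v i else 0) :
    (∀ t : ℝ,
      ((Q * ((Xp + t • D) * (Xp + t • D)ᵀ)).trace +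
          ∑ i, lam i * ((A i * ((Xp + t • D) * (Xp + t • D)ᵀ)).trace - b i)) =
        ((Q * (Xp * Xpᵀ)).trace + ∑ i, lam i * ((A i * (Xp * Xpᵀ)).trace - b i)) +
          t ^ 2 * (v ⬝ᵥ (Q + ∑ i, lam i • A i).mulVec v)) ∧
    (v ⬝ᵥ (Q + ∑ i, lam i • A i).mulVec v < 0 → ∀ t : ℝ, t ≠ 0 →
      ((Q * ((Xp + t • D) * (Xp + t • D)ᵀ)).trace +
          ∑ i, lam i * ((A i * ((Xp + t • D) * (Xp + t • D)ᵀ)).trace - b i)) <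
        ((Q * (Xp * Xpᵀ)).trace + ∑ i, lam i * ((A i * (Xp * Xpᵀ)).trace - b i))) := by
  have hS : v ⬝ᵥ (Q + ∑ i, lam i • A i).mulVec v =
      v ⬝ᵥ Q.mulVec v + ∑ i, lam i * (v ⬝ᵥ (A i).mulVec v) := by
    rw [← aux_tr, Matrix.add_mul, Matrix.sum_mul, trace_add, trace_sum]
    simp [aux_tr, Matrix.smul_mul, trace_smul]
  have hmain : ∀ t : ℝ,
      ((Q * ((Xp + t • D) * (Xp + t • D)ᵀ)).trace +
          ∑ i, lam i * ((A i * ((Xp + t • D) * (Xp + t • D)ᵀ)).trace - b i)) =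
        ((Q * (Xp * Xpᵀ)).trace + ∑ i, lam i * ((A i * (Xp * Xpᵀ)).trace - b i)) +
          t ^ 2 * (v ⬝ᵥ (Q + ∑ i, lam i • A i).mulVec v) := by
    intro t
    rw [aux_key Xp hzero v D hD t, hS]
    simp only [Matrix.mul_add, Matrix.mul_smul, trace_add, trace_smul, aux_tr, smul_eq_mul]
    have hsum : ∑ i, lam i * ((A i * (Xp * Xpᵀ)).trace + t ^ 2 * (v ⬝ᵥ (A i).mulVec v) - b i)
        = ∑ i, (lam i * ((A i * (Xp * Xpᵀ)).trace - b i)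
            + t ^ 2 * (lam i * (v ⬝ᵥ (A i).mulVec v))) :=
      Finset.sum_congr rfl fun i _ => by ring
    rw [hsum, Finset.sum_add_distrib, ← Finset.mul_sum]
    ring
  refine ⟨hmain, fun h t ht => ?_⟩
  rw [hmain t]
  have h2 : 0 < t ^ 2 := by positivity
  nlinarith [mul_neg_of_pos_of_neg h2 h]
end
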